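/- arXiv:1609.08342 — 3 statements merged into one kernel-verified Lean document; each statement's English description precedes it below -/
import Mathlib

section
/- For every fixed m>0, the map β ↦ Λ_β(m) (with values in the extended non-negative reals) is non-decreasing and convex on [0,∞), and Λ₀(m) = 2·Λ(m), where Λ(m) is obtained from the same formula without the symmetrizing factor, i.e. Λ(m) = sup_{s,K,Q} ((|s|²+Q²)/(π²(1+m))) ℓ_m(s,K,Q)^{−1/2} ∫ |t|^{−2} ℓ_m(t,K,Q)^{−1/2} D(s,t,K,Q) dt. -/
open MeasureTheory Real Filter Topology
open scoped InnerProductSpace ENNReal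

noncomputable section

/-- Three-dimensional Euclidean space. -/
abbrev R3 := EuclideanSpace ℝ (Fin 3)

/-- The kernel `G(q₁,…,q_N)` (here with `N` arguments indexed by `Fin N`). -/
def Gker (m μ : ℝ) {N : ℕ} (q : Fin N → R3) : ℝ :=
  (∑ i, ‖q i‖ ^ 2 + (2 / (m + 1)) * ∑ i, ∑ j ∈ Finset.Ioi i, ⟪q i, q j⟫_ℝ + μ)⁻¹

/-- The function `L(q₁,…,q_{N-1})` (here with `N` arguments indexed by `Fin N`). -/
def Lker (m μ : ℝ) {N : ℕ} (q : Fin N → R3) : ℝ :=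
  2 * π ^ 2 * Real.sqrt ((m * (m + 2) / (m + 1) ^ 2) * ∑ i, ‖q i‖ ^ 2
    + (2 * m / (m + 1) ^ 2) * ∑ i, ∑ j ∈ Finset.Ioi i, ⟪q i, q j⟫_ℝ + μ)

/-- `ℓ_m(s,K,Q)`. -/
def ellm (m : ℝ) (s K : R3) (Q : ℝ) : ℝ :=
  Real.sqrt (m / (m + 1) ^ 2 * ‖s + K‖ ^ 2 + m / (m + 1) * (‖s‖ ^ 2 + Q ^ 2))

/-- The quantity `D(s,t,K,Q)`. -/
def Dker (m : ℝ) (s t K : R3) (Q : ℝ) : ℝ :=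
  |⟪s + (2 + m)⁻¹ • K, t + (2 + m)⁻¹ • K⟫_ℝ| /
    ((‖s + (2 + m)⁻¹ • K‖ ^ 2 + ‖t + (2 + m)⁻¹ • K‖ ^ 2
        + m / (1 + m) * (Q ^ 2 + (2 + m)⁻¹ * ‖K‖ ^ 2)) ^ 2
      - ((2 / (1 + m)) * ⟪s + (2 + m)⁻¹ • K, t + (2 + m)⁻¹ • K⟫_ℝ) ^ 2)

/-- `Λ(m)`, as a supremum in the extended nonnegative reals. -/
def Lam (m : ℝ) : ℝ≥0∞ :=
  ⨆ (s : R3) (K : R3) (Q : ℝ) (_ : 0 < Q),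
    ENNReal.ofReal ((‖s‖ ^ 2 + Q ^ 2) / (π ^ 2 * (1 + m)) / Real.sqrt (ellm m s K Q)) *
      ∫⁻ t : R3, ENNReal.ofReal (Dker m s t K Q / (‖t‖ ^ 2 * Real.sqrt (ellm m t K Q)))

/-- `Λ_β(m)`, as a supremum in the extended nonnegative reals. -/
def Lamb (m β : ℝ) : ℝ≥0∞ :=
  ⨆ (s : R3) (K : R3) (Q : ℝ) (_ : 0 < Q),
    ENNReal.ofReal ((‖s‖ ^ 2 + Q ^ 2) / (π ^ 2 * (1 + m))) *
      ∫⁻ t : R3, ENNReal.ofReal ((1 / ‖t‖ ^ 2) *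
        (ellm m s K Q ^ ((β - 1) / 2) / ellm m t K Q ^ ((β + 1) / 2)
          + ellm m t K Q ^ ((β - 1) / 2) / ellm m s K Q ^ ((β + 1) / 2)) * Dker m s t K Q)


section Aux

lemma F_eq {x y : ℝ} (hx : 0 < x) (hy : 0 < y) (β : ℝ) :
    x ^ ((β - 1) / 2) / y ^ ((β + 1) / 2) + y ^ ((β - 1) / 2) / x ^ ((β + 1) / 2)
      = exp (-((log x + log y) / 2)) *
        (exp (β * ((log x - log y) / 2)) + exp (-(β * ((log x - log y) / 2)))) := by
  rw [rpow_def_of_pos hx, rpow_def_of_pos hy, rpow_def_of_pos hx, rpow_def_of_pos hy,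
    ← Real.exp_sub, ← Real.exp_sub, mul_add, ← Real.exp_add, ← Real.exp_add]
  congr 1 <;> ring_nf

lemma ellm_pos {m : ℝ} (hm : 0 < m) (s K : R3) {Q : ℝ} (hQ : 0 < Q) :
    0 < ellm m s K Q := by
  apply Real.sqrt_pos.mpr
  have h1 : 0 < m / (m + 1) * (‖s‖ ^ 2 + Q ^ 2) := by positivity
  have h2 : 0 ≤ m / (m + 1) ^ 2 * ‖s + K‖ ^ 2 := by positivity
  linarith

lemma F_mono {x y β₁ β₂ : ℝ} (hx : 0 < x) (hy : 0 < y) (h0 : 0 ≤ β₁) (h : β₁ ≤ β₂) :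
    x ^ ((β₁ - 1) / 2) / y ^ ((β₁ + 1) / 2) + y ^ ((β₁ - 1) / 2) / x ^ ((β₁ + 1) / 2)
      ≤ x ^ ((β₂ - 1) / 2) / y ^ ((β₂ + 1) / 2) + y ^ ((β₂ - 1) / 2) / x ^ ((β₂ + 1) / 2) := by
  rw [F_eq hx hy, F_eq hx hy]
  have hE : (0:ℝ) < exp (-((log x + log y) / 2)) := exp_pos _
  have key : exp (β₁ * ((log x - log y) / 2)) + exp (-(β₁ * ((log x - log y) / 2)))
      ≤ exp (β₂ * ((log x - log y) / 2)) + exp (-(β₂ * ((log x - log y) / 2))) := by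
    have hc := Real.cosh_le_cosh.mpr
      (show |β₁ * ((log x - log y) / 2)| ≤ |β₂ * ((log x - log y) / 2)| by
        rw [abs_mul, abs_mul]
        exact mul_le_mul_of_nonneg_right
          (by rwa [abs_of_nonneg h0, abs_of_nonneg (h0.trans h)]) (abs_nonneg _))
    rw [Real.cosh_eq, Real.cosh_eq] at hc
    linarith
  exact mul_le_mul_of_nonneg_left key hE.le

lemma F_convex {x y β₁ β₂ a b : ℝ} (hx : 0 < x) (hy : 0 < y)
    (ha : 0 ≤ a) (hb : 0 ≤ b) (hab : a + b = 1) :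
    x ^ ((a * β₁ + b * β₂ - 1) / 2) / y ^ ((a * β₁ + b * β₂ + 1) / 2)
      + y ^ ((a * β₁ + b * β₂ - 1) / 2) / x ^ ((a * β₁ + b * β₂ + 1) / 2)
      ≤ a * (x ^ ((β₁ - 1) / 2) / y ^ ((β₁ + 1) / 2) + y ^ ((β₁ - 1) / 2) / x ^ ((β₁ + 1) / 2))
        + b * (x ^ ((β₂ - 1) / 2) / y ^ ((β₂ + 1) / 2)
            + y ^ ((β₂ - 1) / 2) / x ^ ((β₂ + 1) / 2)) := by
  rw [F_eq hx hy, F_eq hx hy, F_eq hx hy]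
  set w : ℝ := (log x - log y) / 2 with hw
  have hE : (0:ℝ) < exp (-((log x + log y) / 2)) := exp_pos _
  have h1 : exp ((a * β₁ + b * β₂) * w) ≤ a * exp (β₁ * w) + b * exp (β₂ * w) := by
    have := convexOn_exp.2 (Set.mem_univ (β₁ * w)) (Set.mem_univ (β₂ * w)) ha hb hab
    simpa [smul_eq_mul, add_mul, mul_assoc] using this
  have h2 : exp (-((a * β₁ + b * β₂) * w)) ≤ a * exp (-(β₁ * w)) + b * exp (-(β₂ * w)) := by
    have := convexOn_exp.2 (Set.mem_univ (-(β₁ * w))) (Set.mem_univ (-(β₂ * w))) ha hb hab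
    have e : a • -(β₁ * w) + b • -(β₂ * w) = -((a * β₁ + b * β₂) * w) := by
      simp [smul_eq_mul]; ring
    rw [e] at this
    simpa [smul_eq_mul] using this
  nlinarith [hE.le, mul_le_mul_of_nonneg_left (add_le_add h1 h2) hE.le]

lemma integrand_measurable (m β : ℝ) (s K : R3) (Q : ℝ) :
    Measurable (fun t : R3 => ENNReal.ofReal ((1 / ‖t‖ ^ 2) *
        (ellm m s K Q ^ ((β - 1) / 2) / ellm m t K Q ^ ((β + 1) / 2)
          + ellm m t K Q ^ ((β - 1) / 2) / ellm m s K Q ^ ((β + 1) / 2))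
        * Dker m s t K Q)) := by
  apply ENNReal.measurable_ofReal.comp
  apply Measurable.mul
  apply Measurable.mul
  · fun_prop
  · have hel : Measurable (fun t : R3 => ellm m t K Q) := by unfold ellm; fun_prop
    exact ((measurable_const.div (hel.pow_const _)).add ((hel.pow_const _).div measurable_const))
  · unfold Dker
    have c1 : Continuous (fun t : R3 => ⟪s + (2 + m)⁻¹ • K, t + (2 + m)⁻¹ • K⟫_ℝ) :=
      continuous_const.inner (continuous_id.add continuous_const)
    have c2 : Continuous (fun t : R3 => (‖s + (2 + m)⁻¹ • K‖ ^ 2 + ‖t + (2 + m)⁻¹ • K‖ ^ 2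
        + m / (1 + m) * (Q ^ 2 + (2 + m)⁻¹ * ‖K‖ ^ 2)) ^ 2) := by fun_prop
    exact (c1.abs.measurable).div ((c2.sub ((continuous_const.mul c1).pow 2)).measurable)

end Aux

/-- for fixed `m > 0`, `β ↦ Λ_β(m)` is non-decreasing and convex on
`[0,∞)` (as a function with values in `ℝ≥0∞`), and `Λ₀(m) = 2Λ(m)`. -/
theorem Lamb_monotone_convex_and_Lamb_zero (m : ℝ) (hm : 0 < m) :
    (∀ β₁ β₂ : ℝ, 0 ≤ β₁ → β₁ ≤ β₂ → Lamb m β₁ ≤ Lamb m β₂) ∧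
    (∀ β₁ β₂ a b : ℝ, 0 ≤ β₁ → 0 ≤ β₂ → 0 ≤ a → 0 ≤ b → a + b = 1 →
      Lamb m (a * β₁ + b * β₂)
        ≤ ENNReal.ofReal a * Lamb m β₁ + ENNReal.ofReal b * Lamb m β₂) ∧
    Lamb m 0 = 2 * Lam m := by
  have hm1 : (0:ℝ) < 1 + m := by linarith
  refine ⟨?_, ?_, ?_⟩
  · -- monotonicity
    intro β₁ β₂ h0 h12
    unfold Lamb
    refine iSup_mono fun s => iSup_mono fun K => iSup_mono fun Q => iSup_mono fun hQ => ?_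
    refine mul_le_mul_right (lintegral_mono fun t => ?_) _
    have hx := ellm_pos hm s K hQ
    have hy := ellm_pos hm t K hQ
    rcases le_or_gt 0 (Dker m s t K Q) with hD | hD
    · refine ENNReal.ofReal_le_ofReal ?_
      have hT : (0:ℝ) ≤ 1 / ‖t‖ ^ 2 := by positivity
      exact mul_le_mul_of_nonneg_right
        (mul_le_mul_of_nonneg_left (F_mono hx hy h0 h12) hT) hD
    · rw [ENNReal.ofReal_of_nonpos]
      · exact zero_le
      · have hF : (0:ℝ) ≤ (1 / ‖t‖ ^ 2) *
            (ellm m s K Q ^ ((β₁ - 1) / 2) / ellm m t K Q ^ ((β₁ + 1) / 2)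
              + ellm m t K Q ^ ((β₁ - 1) / 2) / ellm m s K Q ^ ((β₁ + 1) / 2)) := by
          positivity
        exact mul_nonpos_of_nonneg_of_nonpos hF hD.le
  · -- convexity
    intro β₁ β₂ a b hβ₁ hβ₂ ha hb hab
    unfold Lamb
    refine iSup_le fun s => iSup_le fun K => iSup_le fun Q => iSup_le fun hQ => ?_
    have hx := ellm_pos hm s K hQ
    have key : ∀ t : R3,
        ENNReal.ofReal ((1 / ‖t‖ ^ 2) *
          (ellm m s K Q ^ ((a * β₁ + b * β₂ - 1) / 2) / ellm m t K Q ^ ((a * β₁ + b * β₂ + 1) / 2)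
            + ellm m t K Q ^ ((a * β₁ + b * β₂ - 1) / 2)
              / ellm m s K Q ^ ((a * β₁ + b * β₂ + 1) / 2)) * Dker m s t K Q)
        ≤ ENNReal.ofReal a * ENNReal.ofReal ((1 / ‖t‖ ^ 2) *
            (ellm m s K Q ^ ((β₁ - 1) / 2) / ellm m t K Q ^ ((β₁ + 1) / 2)
              + ellm m t K Q ^ ((β₁ - 1) / 2) / ellm m s K Q ^ ((β₁ + 1) / 2)) * Dker m s t K Q)
          + ENNReal.ofReal b * ENNReal.ofReal ((1 / ‖t‖ ^ 2) *
            (ellm m s K Q ^ ((β₂ - 1) / 2) / ellm m t K Q ^ ((β₂ + 1) / 2)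
              + ellm m t K Q ^ ((β₂ - 1) / 2) / ellm m s K Q ^ ((β₂ + 1) / 2))
            * Dker m s t K Q) := by
      intro t
      have hy := ellm_pos hm t K hQ
      have hT : (0:ℝ) ≤ 1 / ‖t‖ ^ 2 := by positivity
      rcases le_or_gt 0 (Dker m s t K Q) with hD | hD
      · have hreal : (1 / ‖t‖ ^ 2) *
            (ellm m s K Q ^ ((a * β₁ + b * β₂ - 1) / 2)
                / ellm m t K Q ^ ((a * β₁ + b * β₂ + 1) / 2)
              + ellm m t K Q ^ ((a * β₁ + b * β₂ - 1) / 2)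
                / ellm m s K Q ^ ((a * β₁ + b * β₂ + 1) / 2)) * Dker m s t K Q
            ≤ a * ((1 / ‖t‖ ^ 2) *
                (ellm m s K Q ^ ((β₁ - 1) / 2) / ellm m t K Q ^ ((β₁ + 1) / 2)
                  + ellm m t K Q ^ ((β₁ - 1) / 2) / ellm m s K Q ^ ((β₁ + 1) / 2))
                * Dker m s t K Q)
              + b * ((1 / ‖t‖ ^ 2) *
                (ellm m s K Q ^ ((β₂ - 1) / 2) / ellm m t K Q ^ ((β₂ + 1) / 2)
                  + ellm m t K Q ^ ((β₂ - 1) / 2) / ellm m s K Q ^ ((β₂ + 1) / 2))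
                * Dker m s t K Q) := by
          have := mul_le_mul_of_nonneg_right
            (mul_le_mul_of_nonneg_left (F_convex hx hy ha hb hab (β₁ := β₁) (β₂ := β₂)) hT) hD
          exact this.trans_eq (by ring)
        have hf1 : (0:ℝ) ≤ a * ((1 / ‖t‖ ^ 2) *
            (ellm m s K Q ^ ((β₁ - 1) / 2) / ellm m t K Q ^ ((β₁ + 1) / 2)
              + ellm m t K Q ^ ((β₁ - 1) / 2) / ellm m s K Q ^ ((β₁ + 1) / 2))
            * Dker m s t K Q) := by positivity
        have hf2 : (0:ℝ) ≤ b * ((1 / ‖t‖ ^ 2) *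
            (ellm m s K Q ^ ((β₂ - 1) / 2) / ellm m t K Q ^ ((β₂ + 1) / 2)
              + ellm m t K Q ^ ((β₂ - 1) / 2) / ellm m s K Q ^ ((β₂ + 1) / 2))
            * Dker m s t K Q) := by positivity
        calc _ ≤ ENNReal.ofReal (a * _ + b * _) := ENNReal.ofReal_le_ofReal hreal
          _ = _ := by
            rw [ENNReal.ofReal_add hf1 hf2, ENNReal.ofReal_mul ha, ENNReal.ofReal_mul hb]
      · rw [ENNReal.ofReal_of_nonpos]
        · exact zero_le
        · have hF : (0:ℝ) ≤ (1 / ‖t‖ ^ 2) *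
              (ellm m s K Q ^ ((a * β₁ + b * β₂ - 1) / 2)
                  / ellm m t K Q ^ ((a * β₁ + b * β₂ + 1) / 2)
                + ellm m t K Q ^ ((a * β₁ + b * β₂ - 1) / 2)
                  / ellm m s K Q ^ ((a * β₁ + b * β₂ + 1) / 2)) := by positivity
          exact mul_nonpos_of_nonneg_of_nonpos hF hD.le
    have hLam1 : ENNReal.ofReal ((‖s‖ ^ 2 + Q ^ 2) / (π ^ 2 * (1 + m))) *
        ∫⁻ t : R3, ENNReal.ofReal ((1 / ‖t‖ ^ 2) *
          (ellm m s K Q ^ ((β₁ - 1) / 2) / ellm m t K Q ^ ((β₁ + 1) / 2)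
            + ellm m t K Q ^ ((β₁ - 1) / 2) / ellm m s K Q ^ ((β₁ + 1) / 2))
          * Dker m s t K Q) ≤ Lamb m β₁ :=
      le_iSup_of_le s (le_iSup_of_le K (le_iSup_of_le Q (le_iSup_of_le hQ le_rfl)))
    have hLam2 : ENNReal.ofReal ((‖s‖ ^ 2 + Q ^ 2) / (π ^ 2 * (1 + m))) *
        ∫⁻ t : R3, ENNReal.ofReal ((1 / ‖t‖ ^ 2) *
          (ellm m s K Q ^ ((β₂ - 1) / 2) / ellm m t K Q ^ ((β₂ + 1) / 2)
            + ellm m t K Q ^ ((β₂ - 1) / 2) / ellm m s K Q ^ ((β₂ + 1) / 2))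
          * Dker m s t K Q) ≤ Lamb m β₂ :=
      le_iSup_of_le s (le_iSup_of_le K (le_iSup_of_le Q (le_iSup_of_le hQ le_rfl)))
    calc _ ≤ ENNReal.ofReal ((‖s‖ ^ 2 + Q ^ 2) / (π ^ 2 * (1 + m))) *
          ∫⁻ t : R3, (ENNReal.ofReal a * ENNReal.ofReal ((1 / ‖t‖ ^ 2) *
              (ellm m s K Q ^ ((β₁ - 1) / 2) / ellm m t K Q ^ ((β₁ + 1) / 2)
                + ellm m t K Q ^ ((β₁ - 1) / 2) / ellm m s K Q ^ ((β₁ + 1) / 2))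
              * Dker m s t K Q)
            + ENNReal.ofReal b * ENNReal.ofReal ((1 / ‖t‖ ^ 2) *
              (ellm m s K Q ^ ((β₂ - 1) / 2) / ellm m t K Q ^ ((β₂ + 1) / 2)
                + ellm m t K Q ^ ((β₂ - 1) / 2) / ellm m s K Q ^ ((β₂ + 1) / 2))
              * Dker m s t K Q)) :=
        mul_le_mul_right (lintegral_mono key) _
      _ = ENNReal.ofReal a * (ENNReal.ofReal ((‖s‖ ^ 2 + Q ^ 2) / (π ^ 2 * (1 + m))) *
            ∫⁻ t : R3, ENNReal.ofReal ((1 / ‖t‖ ^ 2) *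
              (ellm m s K Q ^ ((β₁ - 1) / 2) / ellm m t K Q ^ ((β₁ + 1) / 2)
                + ellm m t K Q ^ ((β₁ - 1) / 2) / ellm m s K Q ^ ((β₁ + 1) / 2))
              * Dker m s t K Q))
          + ENNReal.ofReal b * (ENNReal.ofReal ((‖s‖ ^ 2 + Q ^ 2) / (π ^ 2 * (1 + m))) *
            ∫⁻ t : R3, ENNReal.ofReal ((1 / ‖t‖ ^ 2) *
              (ellm m s K Q ^ ((β₂ - 1) / 2) / ellm m t K Q ^ ((β₂ + 1) / 2)
                + ellm m t K Q ^ ((β₂ - 1) / 2) / ellm m s K Q ^ ((β₂ + 1) / 2))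
              * Dker m s t K Q)) := by
        rw [lintegral_add_left ((integrand_measurable m β₁ s K Q).const_mul _),
          lintegral_const_mul' _ _ ENNReal.ofReal_ne_top,
          lintegral_const_mul' _ _ ENNReal.ofReal_ne_top]
        ring
      _ ≤ _ := add_le_add (mul_le_mul_right hLam1 _) (mul_le_mul_right hLam2 _)
  · -- Lamb m 0 = 2 * Lam m
    unfold Lamb Lam
    simp only [ENNReal.mul_iSup]
    refine iSup_congr fun s => iSup_congr fun K => iSup_congr fun Q => iSup_congr fun hQ => ?_
    have hx := ellm_pos hm s K hQ
    have hCreal : (0:ℝ) ≤ (‖s‖ ^ 2 + Q ^ 2) / (π ^ 2 * (1 + m)) := by positivity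
    have hint : ∀ t : R3, ENNReal.ofReal ((1 / ‖t‖ ^ 2) *
        (ellm m s K Q ^ ((0 - 1) / 2 : ℝ) / ellm m t K Q ^ ((0 + 1) / 2 : ℝ)
          + ellm m t K Q ^ ((0 - 1) / 2 : ℝ) / ellm m s K Q ^ ((0 + 1) / 2 : ℝ))
        * Dker m s t K Q)
        = ENNReal.ofReal (2 / Real.sqrt (ellm m s K Q)) *
          ENNReal.ofReal (Dker m s t K Q / (‖t‖ ^ 2 * Real.sqrt (ellm m t K Q))) := by
      intro t
      have hy := ellm_pos hm t K hQ
      have e1 : ellm m s K Q ^ ((0 - 1) / 2 : ℝ) = (Real.sqrt (ellm m s K Q))⁻¹ := by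
        rw [show ((0:ℝ) - 1) / 2 = -(1 / 2) by norm_num, Real.rpow_neg hx.le,
          ← Real.sqrt_eq_rpow]
      have e2 : ellm m s K Q ^ ((0 + 1) / 2 : ℝ) = Real.sqrt (ellm m s K Q) := by
        rw [show ((0:ℝ) + 1) / 2 = 1 / 2 by norm_num, ← Real.sqrt_eq_rpow]
      have e3 : ellm m t K Q ^ ((0 - 1) / 2 : ℝ) = (Real.sqrt (ellm m t K Q))⁻¹ := by
        rw [show ((0:ℝ) - 1) / 2 = -(1 / 2) by norm_num, Real.rpow_neg hy.le,
          ← Real.sqrt_eq_rpow]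
      have e4 : ellm m t K Q ^ ((0 + 1) / 2 : ℝ) = Real.sqrt (ellm m t K Q) := by
        rw [show ((0:ℝ) + 1) / 2 = 1 / 2 by norm_num, ← Real.sqrt_eq_rpow]
      rw [e1, e2, e3, e4, ← ENNReal.ofReal_mul (by positivity)]
      congr 1
      ring
    rw [lintegral_congr hint, lintegral_const_mul' _ _ ENNReal.ofReal_ne_top, ← mul_assoc,
      ← ENNReal.ofReal_mul hCreal,
      show (‖s‖ ^ 2 + Q ^ 2) / (π ^ 2 * (1 + m)) * (2 / Real.sqrt (ellm m s K Q))
        = 2 * ((‖s‖ ^ 2 + Q ^ 2) / (π ^ 2 * (1 + m)) / Real.sqrt (ellm m s K Q)) by ring,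
      ENNReal.ofReal_mul (by norm_num : (0:ℝ) ≤ 2), ENNReal.ofReal_ofNat, mul_assoc]
end
end

section
/- Let f and g be measurable functions on [−1,1] that are non-negative, even, and non-decreasing on [0,1]. Then for all unit vectors a,b ∈ S² ⊂ ℝ³, ∫_{S²} f(ω·a) g(ω·b) dω ≤ ∫_{S²} f(ω·a) g(ω·a) dω, where dω denotes the surface measure on the unit sphere S². In other words, the integral ∫_{S²} f(ω·a) g(ω·b) dω is largest when a and b are parallel or antiparallel. -/
open MeasureTheory Real Filter Topology
open scoped InnerProductSpace ENNReal Pointwise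

noncomputable section

/-- even + monotone on `[0,1]` implies `|x| ≤ |y| → f x ≤ f y` on `[-1,1]`. -/
lemma evenMonoAux {f : ℝ → ℝ} (hfe : ∀ x ∈ Set.Icc (0:ℝ) 1, f (-x) = f x)
    (hfm : MonotoneOn f (Set.Icc (0:ℝ) 1)) {x y : ℝ}
    (hx : x ∈ Set.Icc (-1:ℝ) 1) (hy : y ∈ Set.Icc (-1:ℝ) 1) (hxy : |x| ≤ |y|) :
    f x ≤ f y := by
  have habs : ∀ z, z ∈ Set.Icc (-1:ℝ) 1 → f z = f |z| := by
    intro z hz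
    rcases le_total 0 z with h | h
    · rw [abs_of_nonneg h]
    · rw [abs_of_nonpos h]
      have := hfe (-z) ⟨neg_nonneg.2 h, neg_le.2 hz.1⟩
      rw [neg_neg] at this
      exact this
  rw [habs x hx, habs y hy]
  exact hfm ⟨abs_nonneg x, abs_le.2 ⟨hx.1, hx.2⟩⟩ ⟨abs_nonneg y, abs_le.2 ⟨hy.1, hy.2⟩⟩ hxy

/-- superlevel sets of two even monotone functions are nested. -/
lemma nestedAux {f g : ℝ → ℝ}
    (hfe : ∀ x ∈ Set.Icc (0:ℝ) 1, f (-x) = f x)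
    (hge : ∀ x ∈ Set.Icc (0:ℝ) 1, g (-x) = g x)
    (hfm : MonotoneOn f (Set.Icc (0:ℝ) 1)) (hgm : MonotoneOn g (Set.Icc (0:ℝ) 1))
    (t u : ℝ) :
    (∀ x ∈ Set.Icc (-1:ℝ) 1, t < f x → u < g x) ∨
    (∀ x ∈ Set.Icc (-1:ℝ) 1, u < g x → t < f x) := by
  by_contra h
  push_neg at h
  obtain ⟨⟨x, hx, hfx, hgx⟩, ⟨y, hy, hgy, hfy⟩⟩ := h
  rcases le_total |x| |y| with hxy | hxy
  · exact absurd (hfx.trans_le (evenMonoAux hfe hfm hx hy hxy)) (not_lt.2 hfy)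
  · exact absurd (hgy.trans_le (evenMonoAux hge hgm hy hx hxy)) (not_lt.2 hgx)

/-- rotation invariance of the sphere measure for inner-product level sets. -/
lemma toSphereInnerInvAux {S : Set ℝ} (hS : MeasurableSet S) (a b : R3)
    (hab : ‖b‖ = ‖a‖) :
    (volume : Measure R3).toSphere {ω : Metric.sphere (0:R3) 1 | ⟪(ω:R3), a⟫_ℝ ∈ S} =
    (volume : Measure R3).toSphere {ω : Metric.sphere (0:R3) 1 | ⟪(ω:R3), b⟫_ℝ ∈ S} := by
  obtain ⟨e, he⟩ : ∃ e : R3 ≃ₗᵢ[ℝ] R3, e b = a := by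
    by_cases h : b = a
    · exact ⟨LinearIsometryEquiv.refl ℝ R3, by rw [h]; rfl⟩
    · exact ⟨Submodule.reflection (ℝ ∙ (b - a))ᗮ, Submodule.reflection_sub hab⟩
  have hmes : ∀ c : R3,
      MeasurableSet {ω : Metric.sphere (0:R3) 1 | ⟪(ω:R3), c⟫_ℝ ∈ S} :=
    fun c => (continuous_subtype_val.inner continuous_const).measurable hS
  rw [Measure.toSphere_apply' _ (hmes a), Measure.toSphere_apply' _ (hmes b)]
  congr 1
  have himg : ∀ c : R3,
      (Subtype.val '' {ω : Metric.sphere (0:R3) 1 | ⟪(ω:R3), c⟫_ℝ ∈ S}) =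
        {x : R3 | ‖x‖ = 1 ∧ ⟪x, c⟫_ℝ ∈ S} := by
    intro c; ext x
    constructor
    · rintro ⟨ω, hω, rfl⟩
      exact ⟨mem_sphere_zero_iff_norm.1 ω.2, hω⟩
    · rintro ⟨hx, hxS⟩
      exact ⟨⟨x, mem_sphere_zero_iff_norm.2 hx⟩, hxS, rfl⟩
  rw [himg a, himg b]
  set Ta := {x : R3 | ‖x‖ = 1 ∧ ⟪x, a⟫_ℝ ∈ S}
  set Tb := {x : R3 | ‖x‖ = 1 ∧ ⟪x, b⟫_ℝ ∈ S}
  have key : ⇑e ⁻¹' (Set.Ioo (0:ℝ) 1 • Ta) = Set.Ioo (0:ℝ) 1 • Tb := by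
    ext x
    constructor
    · rintro hx
      obtain ⟨r, hr, y, ⟨hy1, hy2⟩, hxy⟩ := hx
      refine ⟨r, hr, e.symm y, ⟨by simp [hy1], ?_⟩, ?_⟩
      · have : ⟪e.symm y, b⟫_ℝ = ⟪y, a⟫_ℝ := by
          rw [← he, ← LinearIsometryEquiv.inner_map_map e, e.apply_symm_apply]
        rwa [this]
      · have := congrArg e.symm hxy
        rwa [LinearIsometryEquiv.map_smul, e.symm_apply_apply] at this
    · rintro ⟨r, hr, y, ⟨hy1, hy2⟩, hxy⟩
      refine ⟨r, hr, e y, ⟨by simp [hy1], ?_⟩, ?_⟩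
      · rwa [← he, LinearIsometryEquiv.inner_map_map]
      · rw [← hxy]; exact (e.map_smul r y).symm
  have h1 : (volume : Measure R3).map e.toMeasurableEquiv = volume := by
    have := (LinearIsometryEquiv.measurePreserving e).map_eq
    simpa [LinearIsometryEquiv.coe_toMeasurableEquiv] using this
  calc volume (Set.Ioo (0:ℝ) 1 • Ta)
      = ((volume : Measure R3).map e.toMeasurableEquiv) (Set.Ioo (0:ℝ) 1 • Ta) := by rw [h1]
    _ = volume (e.toMeasurableEquiv ⁻¹' (Set.Ioo (0:ℝ) 1 • Ta)) :=
        MeasurableEquiv.map_apply _ _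
    _ = volume (Set.Ioo (0:ℝ) 1 • Tb) := by
        rw [show (e.toMeasurableEquiv ⁻¹' (Set.Ioo (0:ℝ) 1 • Ta))
            = ⇑e ⁻¹' (Set.Ioo (0:ℝ) 1 • Ta) from rfl, key]

/-- Lemma 5: if `f` and `g` are measurable, non-negative, even functions
on `[-1,1]` that are non-decreasing on `[0,1]`, then for unit vectors `a, b ∈ S²`,
`∫_{S²} f(ω·a) g(ω·b) dω ≤ ∫_{S²} f(ω·a) g(ω·a) dω`,
where the sphere carries its surface measure. -/
theorem sphere_rearrangement (f g : ℝ → ℝ) (hf : Measurable f) (hg : Measurable g)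
    (hf0 : ∀ x ∈ Set.Icc (-1 : ℝ) 1, 0 ≤ f x) (hg0 : ∀ x ∈ Set.Icc (-1 : ℝ) 1, 0 ≤ g x)
    (hfe : ∀ x ∈ Set.Icc (0 : ℝ) 1, f (-x) = f x)
    (hge : ∀ x ∈ Set.Icc (0 : ℝ) 1, g (-x) = g x)
    (hfm : MonotoneOn f (Set.Icc (0 : ℝ) 1)) (hgm : MonotoneOn g (Set.Icc (0 : ℝ) 1))
    (a b : R3) (ha : ‖a‖ = 1) (hb : ‖b‖ = 1) :
    (∫ ω : Metric.sphere (0 : R3) 1,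
        f ⟪(ω : R3), a⟫_ℝ * g ⟪(ω : R3), b⟫_ℝ ∂((volume : Measure R3).toSphere))
      ≤ ∫ ω : Metric.sphere (0 : R3) 1,
          f ⟪(ω : R3), a⟫_ℝ * g ⟪(ω : R3), a⟫_ℝ ∂((volume : Measure R3).toSphere) := by
  set μ := (volume : Measure R3).toSphere with hμdef
  have habs1 : ∀ (c : R3), ‖c‖ = 1 → ∀ ω : Metric.sphere (0:R3) 1,
      |⟪(ω:R3), c⟫_ℝ| ≤ 1 := by
    intro c hc ω
    have h2 := abs_real_inner_le_norm (ω:R3) c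
    rwa [mem_sphere_zero_iff_norm.1 ω.2, hc, one_mul] at h2
  have hbound : ∀ (c : R3), ‖c‖ = 1 → ∀ ω : Metric.sphere (0:R3) 1,
      ⟪(ω:R3), c⟫_ℝ ∈ Set.Icc (-1:ℝ) 1 := fun c hc ω => abs_le.1 (habs1 c hc ω)
  have hFmes : ∀ c : R3, Measurable fun ω : Metric.sphere (0:R3) 1 => f ⟪(ω:R3), c⟫_ℝ :=
    fun c => hf.comp (continuous_subtype_val.inner continuous_const).measurable
  have hGmes : ∀ c : R3, Measurable fun ω : Metric.sphere (0:R3) 1 => g ⟪(ω:R3), c⟫_ℝ :=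
    fun c => hg.comp (continuous_subtype_val.inner continuous_const).measurable
  have hFnn : ∀ ω : Metric.sphere (0:R3) 1, 0 ≤ f ⟪(ω:R3), a⟫_ℝ :=
    fun ω => hf0 _ (hbound a ha ω)
  have hGnn : ∀ (c : R3), ‖c‖ = 1 → ∀ ω : Metric.sphere (0:R3) 1, 0 ≤ g ⟪(ω:R3), c⟫_ℝ :=
    fun c hc ω => hg0 _ (hbound c hc ω)
  -- layer cake representation
  have layer : ∀ c : R3, ‖c‖ = 1 →
      (∫⁻ ω : Metric.sphere (0:R3) 1,
          ENNReal.ofReal (f ⟪(ω:R3), a⟫_ℝ) * ENNReal.ofReal (g ⟪(ω:R3), c⟫_ℝ) ∂μ)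
        = ∫⁻ u in Set.Ioi (0:ℝ), ∫⁻ t in Set.Ioi (0:ℝ),
            μ ({ω : Metric.sphere (0:R3) 1 | t < f ⟪(ω:R3), a⟫_ℝ}
              ∩ {ω : Metric.sphere (0:R3) 1 | u < g ⟪(ω:R3), c⟫_ℝ}) := by
    intro c hc
    have hW : Measurable fun ω : Metric.sphere (0:R3) 1 =>
        ENNReal.ofReal (f ⟪(ω:R3), a⟫_ℝ) := (hFmes a).ennreal_ofReal
    have hV : Measurable fun ω : Metric.sphere (0:R3) 1 =>
        ENNReal.ofReal (g ⟪(ω:R3), c⟫_ℝ) := (hGmes c).ennreal_ofReal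
    have step1 := lintegral_withDensity_eq_lintegral_mul μ hW hV
    simp only [Pi.mul_apply] at step1
    rw [← step1]
    rw [lintegral_eq_lintegral_meas_lt _ (Eventually.of_forall (hGnn c hc))
      (hGmes c).aemeasurable]
    refine lintegral_congr fun u => ?_
    rw [withDensity_apply _ (measurableSet_lt measurable_const (hGmes c))]
    rw [lintegral_eq_lintegral_meas_lt _ (Eventually.of_forall hFnn)
      (hFmes a).aemeasurable]
    refine lintegral_congr fun t => ?_
    rw [Measure.restrict_apply (measurableSet_lt measurable_const (hFmes a))]
  -- pointwise comparison of the slab measures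
  have ptwise : ∀ u t : ℝ,
      μ ({ω : Metric.sphere (0:R3) 1 | t < f ⟪(ω:R3), a⟫_ℝ}
          ∩ {ω : Metric.sphere (0:R3) 1 | u < g ⟪(ω:R3), b⟫_ℝ})
        ≤ μ ({ω : Metric.sphere (0:R3) 1 | t < f ⟪(ω:R3), a⟫_ℝ}
          ∩ {ω : Metric.sphere (0:R3) 1 | u < g ⟪(ω:R3), a⟫_ℝ}) := by
    intro u t
    rcases nestedAux hfe hge hfm hgm t u with h | h
    · have hsub : {ω : Metric.sphere (0:R3) 1 | t < f ⟪(ω:R3), a⟫_ℝ}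
          ⊆ {ω : Metric.sphere (0:R3) 1 | u < g ⟪(ω:R3), a⟫_ℝ} :=
        fun ω hω => h _ (hbound a ha ω) hω
      rw [Set.inter_eq_left.2 hsub]
      exact measure_mono Set.inter_subset_left
    · have hsub : {ω : Metric.sphere (0:R3) 1 | u < g ⟪(ω:R3), a⟫_ℝ}
          ⊆ {ω : Metric.sphere (0:R3) 1 | t < f ⟪(ω:R3), a⟫_ℝ} :=
        fun ω hω => h _ (hbound a ha ω) hω
      rw [Set.inter_eq_right.2 hsub]
      calc μ _ ≤ μ {ω : Metric.sphere (0:R3) 1 | u < g ⟪(ω:R3), b⟫_ℝ} :=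
            measure_mono Set.inter_subset_right
        _ = μ {ω : Metric.sphere (0:R3) 1 | u < g ⟪(ω:R3), a⟫_ℝ} :=
            toSphereInnerInvAux (hg measurableSet_Ioi) b a (ha.trans hb.symm)
  -- core inequality for lintegrals
  have core :
      (∫⁻ ω : Metric.sphere (0:R3) 1,
          ENNReal.ofReal (f ⟪(ω:R3), a⟫_ℝ) * ENNReal.ofReal (g ⟪(ω:R3), b⟫_ℝ) ∂μ)
        ≤ ∫⁻ ω : Metric.sphere (0:R3) 1,
          ENNReal.ofReal (f ⟪(ω:R3), a⟫_ℝ) * ENNReal.ofReal (g ⟪(ω:R3), a⟫_ℝ) ∂μ := by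
    rw [layer b hb, layer a ha]
    exact lintegral_mono fun u => lintegral_mono fun t => ptwise u t
  -- finiteness of the right-hand side
  have hfin :
      (∫⁻ ω : Metric.sphere (0:R3) 1,
          ENNReal.ofReal (f ⟪(ω:R3), a⟫_ℝ) * ENNReal.ofReal (g ⟪(ω:R3), a⟫_ℝ) ∂μ) ≠ ⊤ := by
    have h1m : (1:ℝ) ∈ Set.Icc (-1:ℝ) 1 := ⟨by norm_num, le_refl 1⟩
    have hle : ∀ ω : Metric.sphere (0:R3) 1,
        ENNReal.ofReal (f ⟪(ω:R3), a⟫_ℝ) * ENNReal.ofReal (g ⟪(ω:R3), a⟫_ℝ)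
          ≤ ENNReal.ofReal (f 1) * ENNReal.ofReal (g 1) := by
      intro ω
      have habsle : |⟪(ω:R3), a⟫_ℝ| ≤ |1| := by rw [abs_one]; exact habs1 a ha ω
      exact mul_le_mul'
        (ENNReal.ofReal_le_ofReal (evenMonoAux hfe hfm (hbound a ha ω) h1m habsle))
        (ENNReal.ofReal_le_ofReal (evenMonoAux hge hgm (hbound a ha ω) h1m habsle))
    refine ne_of_lt (lt_of_le_of_lt (lintegral_mono hle) ?_)
    rw [lintegral_const]
    exact ENNReal.mul_lt_top (ENNReal.mul_lt_top ENNReal.ofReal_lt_top ENNReal.ofReal_lt_top)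
      (measure_lt_top μ _)
  -- convert the Bochner integrals
  have hieq : ∀ c : R3, ‖c‖ = 1 →
      (∫ ω : Metric.sphere (0:R3) 1, f ⟪(ω:R3), a⟫_ℝ * g ⟪(ω:R3), c⟫_ℝ ∂μ)
        = (∫⁻ ω : Metric.sphere (0:R3) 1,
            ENNReal.ofReal (f ⟪(ω:R3), a⟫_ℝ) * ENNReal.ofReal (g ⟪(ω:R3), c⟫_ℝ) ∂μ).toReal := by
    intro c hc
    rw [integral_eq_lintegral_of_nonneg_ae
      (Eventually.of_forall fun ω => mul_nonneg (hFnn ω) (hGnn c hc ω))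
      ((hFmes a).mul (hGmes c)).aestronglyMeasurable]
    congr 1
    exact lintegral_congr fun ω => ENNReal.ofReal_mul (hFnn ω)
  rw [hieq b hb, hieq a ha]
  exact ENNReal.toReal_mono hfin core
end
end

section
/- For every p∈ℝ³, the function k ↦ 2/|k|² − 1/|k−p|² − 1/|k+p|² is Lebesgue integrable on ℝ³ and its integral equals 0. Equivalently, for every p∈ℝ³, lim_{K→∞} ∫_{{k∈ℝ³ : |k|<K}} ( 1/|k|² − 1/|k−p|² ) dk = 0. -/
open MeasureTheory Real Filter Topology
open Metric Set
open scoped InnerProductSpace ENNReal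

noncomputable section

lemma intOn_ball (R : ℝ) :
    IntegrableOn (fun k : R3 => 1 / ‖k‖ ^ 2) (Metric.ball (0:R3) R) := by
  have hmeas : Measurable (fun k : R3 => 1 / ‖k‖ ^ 2) := by fun_prop
  constructor
  · exact hmeas.aestronglyMeasurable
  · rw [hasFiniteIntegral_iff_norm]
    set μ := volume.restrict (Metric.ball (0:R3) R) with hμ
    have hnn : ∀ x : R3, 0 ≤ 1 / ‖x‖ ^ 2 := fun x => by positivity
    have : ∫⁻ x : R3, ENNReal.ofReal ‖1 / ‖x‖ ^ 2‖ ∂μ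
        = ∫⁻ x : R3, ENNReal.ofReal (1 / ‖x‖ ^ 2) ∂μ := by
      congr 1; ext x; rw [Real.norm_of_nonneg (hnn x)]
    rw [this, lintegral_eq_lintegral_meas_le μ (Filter.Eventually.of_forall hnn)
      hmeas.aemeasurable]
    set B := volume (Metric.ball (0:R3) 1) with hB
    have hBfin : B < ∞ := measure_ball_lt_top
    have key : ∀ t : ℝ, 0 < t →
        μ {a : R3 | t ≤ 1 / ‖a‖ ^ 2}
          ≤ ENNReal.ofReal (Real.sqrt (1 / t) ^ 3) * B := by
      intro t ht
      have hsub : {a : R3 | t ≤ 1 / ‖a‖ ^ 2}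
          ⊆ Metric.closedBall 0 (Real.sqrt (1 / t)) := by
        intro a ha
        simp only [mem_setOf_eq] at ha
        simp only [Metric.mem_closedBall, dist_zero_right]
        rcases eq_or_ne ‖a‖ 0 with h0 | h0
        · rw [h0]; positivity
        · have hpos : (0:ℝ) < ‖a‖ ^ 2 := by positivity
          have : ‖a‖ ^ 2 ≤ 1 / t := by
            rw [le_div_iff₀ ht]
            have := (le_div_iff₀ hpos).mp ha
            linarith
          calc ‖a‖ = Real.sqrt (‖a‖ ^ 2) := by rw [Real.sqrt_sq (norm_nonneg a)]
            _ ≤ Real.sqrt (1 / t) := Real.sqrt_le_sqrt this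
      calc μ {a : R3 | t ≤ 1 / ‖a‖ ^ 2}
          ≤ volume {a : R3 | t ≤ 1 / ‖a‖ ^ 2} :=
            Measure.le_iff'.mp (Measure.restrict_le_self) _
        _ ≤ volume (Metric.closedBall (0:R3) (Real.sqrt (1 / t))) := measure_mono hsub
        _ = ENNReal.ofReal (Real.sqrt (1 / t) ^ Module.finrank ℝ R3) * B := by
            rw [Measure.addHaar_closedBall _ _ (Real.sqrt_nonneg _)]
        _ = _ := by norm_num [show Module.finrank ℝ R3 = 3 from by simp]
    calc ∫⁻ t in Ioi (0:ℝ), μ {a : R3 | t ≤ 1 / ‖a‖ ^ 2}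
        ≤ ∫⁻ t in Ioc (0:ℝ) 1 ∪ Ioi 1, μ {a : R3 | t ≤ 1 / ‖a‖ ^ 2} :=
          lintegral_mono_set Ioi_subset_Ioc_union_Ioi
      _ ≤ (∫⁻ t in Ioc (0:ℝ) 1, μ {a : R3 | t ≤ 1 / ‖a‖ ^ 2})
          + ∫⁻ t in Ioi (1:ℝ), μ {a : R3 | t ≤ 1 / ‖a‖ ^ 2} := lintegral_union_le _ _ _
      _ < ∞ := by
          refine ENNReal.add_lt_top.2 ⟨?_, ?_⟩
          · calc (∫⁻ t in Ioc (0:ℝ) 1, μ {a : R3 | t ≤ 1 / ‖a‖ ^ 2})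
                ≤ ∫⁻ _ in Ioc (0:ℝ) 1, μ univ :=
                  setLIntegral_mono measurable_const fun t _ => measure_mono (subset_univ _)
              _ = μ univ * volume (Ioc (0:ℝ) 1) := setLIntegral_const _ _
              _ < ∞ := by
                  refine ENNReal.mul_lt_top ?_ (by simp)
                  rw [hμ, Measure.restrict_apply_univ]
                  exact measure_ball_lt_top
          · have heq : ∀ t ∈ Ioi (1:ℝ),
                μ {a : R3 | t ≤ 1 / ‖a‖ ^ 2}
                  ≤ ENNReal.ofReal (t ^ (-(3:ℝ)/2)) * B := by
              intro t ht
              have ht0 : (0:ℝ) < t := lt_trans one_pos ht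
              have : Real.sqrt (1 / t) ^ 3 = t ^ (-(3:ℝ)/2) := by
                rw [Real.sqrt_eq_rpow, ← Real.rpow_natCast ((1/t) ^ ((1:ℝ)/2)) 3,
                  ← Real.rpow_mul (by positivity), one_div, Real.inv_rpow ht0.le,
                  ← Real.rpow_neg ht0.le]
                norm_num
              rw [← this]
              exact key t ht0
            calc (∫⁻ t in Ioi (1:ℝ), μ {a : R3 | t ≤ 1 / ‖a‖ ^ 2})
                ≤ ∫⁻ t in Ioi (1:ℝ), ENNReal.ofReal (t ^ (-(3:ℝ)/2)) * B :=
                  setLIntegral_mono (by fun_prop) heq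
              _ = (∫⁻ t in Ioi (1:ℝ), ENNReal.ofReal (t ^ (-(3:ℝ)/2))) * B :=
                  lintegral_mul_const' B _ hBfin.ne
              _ < ∞ := by
                  refine ENNReal.mul_lt_top ?_ hBfin
                  have hint : IntegrableOn (fun t : ℝ => t ^ (-(3:ℝ)/2)) (Ioi 1) :=
                    integrableOn_Ioi_rpow_of_lt (by norm_num) one_pos
                  have := hint.2
                  rw [hasFiniteIntegral_iff_norm] at this
                  refine lt_of_le_of_lt (lintegral_mono fun t => ?_) this
                  exact ENNReal.ofReal_le_ofReal (le_abs_self _)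

lemma intOn_ball_shift (a : R3) (R : ℝ) :
    IntegrableOn (fun k : R3 => 1 / ‖k - a‖ ^ 2) (Metric.ball (0:R3) R) := by
  have h1 : IntegrableOn (fun k : R3 => 1 / ‖k‖ ^ 2) (Metric.ball (-a) R) := by
    refine (intOn_ball (‖a‖ + R)).mono_set fun x hx => ?_
    simp only [Metric.mem_ball, dist_eq_norm, sub_neg_eq_add, sub_zero] at hx ⊢
    calc ‖x‖ = ‖x + a - a‖ := by rw [add_sub_cancel_right]
      _ ≤ ‖x + a‖ + ‖a‖ := norm_sub_le _ _
      _ < ‖a‖ + R := by linarith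
  refine (integrable_indicator_iff measurableSet_ball).mp ?_
  have h2 := ((integrable_indicator_iff measurableSet_ball).mpr h1).comp_sub_right a
  refine h2.congr (Filter.Eventually.of_forall fun x => ?_)
  by_cases hx : x ∈ Metric.ball (0:R3) R
  · have hx' : x - a ∈ Metric.ball (-a : R3) R := by
      simp only [Metric.mem_ball, dist_eq_norm, sub_neg_eq_add, sub_add_cancel] at *
      simpa using hx
    simp only [Set.indicator_of_mem hx', Set.indicator_of_mem hx]
  · have hx' : x - a ∉ Metric.ball (-a : R3) R := by
      simp only [Metric.mem_ball, dist_eq_norm, sub_neg_eq_add, sub_add_cancel] at *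
      simpa using hx
    simp only [Set.indicator_of_notMem hx', Set.indicator_of_notMem hx]

lemma real_core (s a t y z : ℝ) (hs : 0 < s) (ha : 0 ≤ a) (has : a ≤ s)
    (ht2 : t ^ 2 ≤ a * s) (hyeq : y = s - 2 * t + a) (hzeq : z = s + 2 * t + a)
    (hy2 : s / 4 ≤ y) (hz2 : s / 4 ≤ z) :
    |2 / s - 1 / y - 1 / z| ≤ 192 * a / s ^ 2 := by
  have hy0 : (0:ℝ) < y := lt_of_lt_of_le (by positivity) hy2
  have hz0 : (0:ℝ) < z := lt_of_lt_of_le (by positivity) hz2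
  have hgeq : 2 / s - 1 / y - 1 / z
      = (2 * a * s + 2 * a ^ 2 - 8 * t ^ 2) / (s * y * z) := by
    field_simp
    rw [hyeq, hzeq]
    ring
  rw [hgeq, abs_div, abs_of_pos (by positivity : (0:ℝ) < s * y * z)]
  have hnum : |2 * a * s + 2 * a ^ 2 - 8 * t ^ 2| ≤ 12 * a * s := by
    rw [abs_le]
    constructor <;> nlinarith [sq_nonneg t, mul_nonneg ha hs.le]
  have hden : s * (s / 4) * (s / 4) ≤ s * y * z := by
    nlinarith [mul_le_mul_of_nonneg_left hy2 hs.le, mul_nonneg (mul_nonneg hs.le hy0.le) hz0.le]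
  calc |2 * a * s + 2 * a ^ 2 - 8 * t ^ 2| / (s * y * z)
      ≤ (12 * a * s) / (s * (s / 4) * (s / 4)) :=
        div_le_div₀ (by positivity) hnum (by positivity) hden
    _ = 192 * a / s ^ 2 := by
        field_simp
        ring

lemma g_bound (p k : R3) (hk : 2 * ‖p‖ + 1 ≤ ‖k‖) :
    |2 / ‖k‖ ^ 2 - 1 / ‖k - p‖ ^ 2 - 1 / ‖k + p‖ ^ 2| ≤ 192 * ‖p‖ ^ 2 / ‖k‖ ^ 4 := by
  have hk1 : (1:ℝ) ≤ ‖k‖ := le_trans (by linarith [norm_nonneg p]) hk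
  have hp2 : ‖p‖ ≤ (‖k‖ - 1) / 2 := by linarith
  have hy : ‖k‖ / 2 ≤ ‖k - p‖ := by
    have := norm_sub_norm_le k p
    linarith
  have hz : ‖k‖ / 2 ≤ ‖k + p‖ := by
    have h := norm_sub_norm_le k (-p)
    rw [sub_neg_eq_add, norm_neg] at h
    linarith
  have hy2 : ‖k‖ ^ 2 / 4 ≤ ‖k - p‖ ^ 2 := by
    have := pow_le_pow_left₀ (by positivity : (0:ℝ) ≤ ‖k‖ / 2) hy 2
    nlinarith [this]
  have hz2 : ‖k‖ ^ 2 / 4 ≤ ‖k + p‖ ^ 2 := by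
    have := pow_le_pow_left₀ (by positivity : (0:ℝ) ≤ ‖k‖ / 2) hz 2
    nlinarith [this]
  have ht2 : (inner ℝ k p : ℝ) ^ 2 ≤ ‖p‖ ^ 2 * ‖k‖ ^ 2 := by
    have h := abs_real_inner_le_norm k p
    have h2 : |(inner ℝ k p : ℝ)| ^ 2 ≤ (‖k‖ * ‖p‖) ^ 2 :=
      pow_le_pow_left₀ (abs_nonneg _) h 2
    rw [sq_abs] at h2
    nlinarith [h2]
  have has : ‖p‖ ^ 2 ≤ ‖k‖ ^ 2 := by
    have : ‖p‖ ≤ ‖k‖ := by linarith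
    nlinarith [norm_nonneg p]
  have hfin : ‖k‖ ^ 4 = (‖k‖ ^ 2) ^ 2 := by ring
  rw [hfin]
  exact real_core (‖k‖ ^ 2) (‖p‖ ^ 2) (inner ℝ k p) (‖k - p‖ ^ 2) (‖k + p‖ ^ 2)
    (by positivity) (by positivity) has ht2 (norm_sub_sq_real k p) (norm_add_sq_real k p)
    hy2 hz2

lemma integrable_g (p : R3) :
    Integrable (fun k : R3 => 2 / ‖k‖ ^ 2 - 1 / ‖k - p‖ ^ 2 - 1 / ‖k + p‖ ^ 2) := by
  set M := 2 * ‖p‖ + 1 with hM_def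
  have hM : (0:ℝ) < M := by positivity
  rw [← integrableOn_univ, ← Set.union_compl_self (Metric.closedBall (0:R3) M)]
  refine IntegrableOn.union ?_ ?_
  · refine IntegrableOn.mono_set ?_ (Metric.closedBall_subset_ball (by linarith : M < M + 1))
    have h1 := (intOn_ball (M + 1)).const_mul (2:ℝ)
    have h2 := intOn_ball_shift p (M + 1)
    have h3 := intOn_ball_shift (-p) (M + 1)
    simp only [sub_neg_eq_add] at h3
    have h4 := (h1.sub h2).sub h3
    refine IntegrableOn.congr_fun h4 (fun x _ => ?_) measurableSet_ball
    simp only [Pi.sub_apply]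
    ring
  · have hmaj : Integrable (fun k : R3 => 192 * ‖p‖ ^ 2 * (16 * (1 + ‖k‖) ^ (-(4:ℝ)))) := by
      refine (integrable_one_add_norm ?_).const_mul _ |>.const_mul _
      rw [show (Module.finrank ℝ R3) = 3 by simp]
      norm_num
    refine Integrable.mono' hmaj.integrableOn ?_ ?_
    · exact ((by fun_prop : Measurable (fun k : R3 =>
        2 / ‖k‖ ^ 2 - 1 / ‖k - p‖ ^ 2 - 1 / ‖k + p‖ ^ 2)).aestronglyMeasurable)
    · rw [ae_restrict_iff' measurableSet_closedBall.compl]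
      refine Filter.Eventually.of_forall fun x hx => ?_
      have hxM : M ≤ ‖x‖ := by
        simp only [Set.mem_compl_iff, Metric.mem_closedBall, dist_zero_right, not_le] at hx
        exact hx.le
      have hx1 : (1:ℝ) ≤ ‖x‖ := le_trans (by linarith [norm_nonneg p]) hxM
      have hb := g_bound p x hxM
      rw [Real.norm_eq_abs]
      have hpow : (1 + ‖x‖) ^ (-(4:ℝ)) = 1 / (1 + ‖x‖) ^ (4:ℕ) := by
        rw [Real.rpow_neg (by positivity), one_div]
        congr 1
        rw [← Real.rpow_natCast (1 + ‖x‖) 4]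
        norm_num
      have h16 : (1 + ‖x‖) ^ (4:ℕ) ≤ 16 * ‖x‖ ^ 4 := by
        have h2x : 1 + ‖x‖ ≤ 2 * ‖x‖ := by linarith
        calc (1 + ‖x‖) ^ (4:ℕ) ≤ (2 * ‖x‖) ^ (4:ℕ) :=
              pow_le_pow_left₀ (by positivity) h2x 4
          _ = 16 * ‖x‖ ^ 4 := by ring
      have hstep : 192 * ‖p‖ ^ 2 / ‖x‖ ^ 4
          ≤ 192 * ‖p‖ ^ 2 * 16 / (1 + ‖x‖) ^ (4:ℕ) := by
        rw [div_le_div_iff₀ (by positivity) (by positivity)]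
        nlinarith [mul_le_mul_of_nonneg_left h16 (by positivity : (0:ℝ) ≤ 192 * ‖p‖ ^ 2)]
      refine hb.trans (hstep.trans (le_of_eq ?_))
      rw [hpow]
      ring

lemma integral_g_zero (p : R3) :
    (∫ k : R3, (2 / ‖k‖ ^ 2 - 1 / ‖k - p‖ ^ 2 - 1 / ‖k + p‖ ^ 2)) = 0 := by
  set gp := fun k : R3 => 2 / ‖k‖ ^ 2 - 1 / ‖k - p‖ ^ 2 - 1 / ‖k + p‖ ^ 2 with hgp_def
  set g2 := fun k : R3 => 2 / ‖k‖ ^ 2 - 1 / ‖k - (2:ℝ)•p‖ ^ 2 - 1 / ‖k + (2:ℝ)•p‖ ^ 2 with hg2_def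
  have hInt : Integrable gp := integrable_g p
  set I := ∫ k : R3, gp k with hI_def
  set J := ∫ k : R3, g2 k with hJ_def
  -- J = 4 I by translation invariance
  have hpt : ∀ k : R3, g2 k = gp (k + p) + gp (k - p) + 2 * gp k := by
    intro k
    have e1 : (k + p) - p = k := by abel
    have e2 : (k - p) + p = k := by abel
    have e3 : (k + p) + p = k + (2:ℝ)•p := by rw [two_smul]; abel
    have e4 : (k - p) - p = k - (2:ℝ)•p := by rw [two_smul]; abel
    simp only [hgp_def, hg2_def, e1, e2, e3, e4]
    ring
  have hA : Integrable (fun k : R3 => gp (k + p)) := hInt.comp_add_right p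
  have hB : Integrable (fun k : R3 => gp (k - p)) := hInt.comp_sub_right p
  have hJ4 : J = 4 * I := by
    have : J = ∫ k : R3, (gp (k + p) + gp (k - p) + 2 * gp k) := by
      rw [hJ_def]
      exact integral_congr_ae (Filter.Eventually.of_forall hpt)
    rw [this]
    have hA2 : Integrable (fun k : R3 => gp (k + p) + gp (k - p)) := by exact hA.add hB
    rw [integral_add hA2 (hInt.const_mul 2), integral_add hA hB,
      integral_const_mul, integral_add_right_eq_self gp p, integral_sub_right_eq_self gp p]
    ring
  -- J = 2 I by scaling
  have key : ∀ c y : ℝ, c / (2 * y) ^ 2 = 1 / 4 * (c / y ^ 2) := by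
    intro c y
    rw [div_mul_div_comm, one_mul]
    congr 1
    ring
  have hsc : ∀ x : R3, g2 ((2:ℝ) • x) = 1 / 4 * gp x := by
    intro x
    have e1 : (2:ℝ)•x - (2:ℝ)•p = (2:ℝ)•(x - p) := (smul_sub (2:ℝ) x p).symm
    have e2 : (2:ℝ)•x + (2:ℝ)•p = (2:ℝ)•(x + p) := (smul_add (2:ℝ) x p).symm
    simp only [hg2_def, hgp_def, e1, e2, norm_smul]
    rw [show ‖(2:ℝ)‖ = 2 from by simp]
    rw [key 2 ‖x‖, key 1 ‖x - p‖, key 1 ‖x + p‖]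
    ring
  have hJ2 : J = 2 * I := by
    have hcs := MeasureTheory.Measure.integral_comp_smul (volume : Measure R3) g2 2
    rw [show (Module.finrank ℝ R3) = 3 by simp] at hcs
    have hlhs : ∫ x : R3, g2 ((2:ℝ) • x) = 1 / 4 * I := by
      rw [show (fun x : R3 => g2 ((2:ℝ) • x)) = fun x : R3 => 1 / 4 * gp x from funext hsc]
      rw [integral_const_mul, hI_def]
    rw [hlhs] at hcs
    have : |((2:ℝ) ^ 3)⁻¹| = 1 / 8 := by norm_num
    rw [this, smul_eq_mul, ← hJ_def] at hcs
    linarith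
  linarith [hJ4, hJ2]

lemma half_integral (p : R3) (K : ℝ) :
    ∫ k in Metric.ball (0:R3) K, (1 / ‖k‖ ^ 2 - 1 / ‖k - p‖ ^ 2)
      = 1 / 2 * ∫ k in Metric.ball (0:R3) K,
        (2 / ‖k‖ ^ 2 - 1 / ‖k - p‖ ^ 2 - 1 / ‖k + p‖ ^ 2) := by
  set B := Metric.ball (0:R3) K with hB_def
  have hf1 : IntegrableOn (fun k : R3 => 1 / ‖k‖ ^ 2) B := intOn_ball K
  have hf2 : IntegrableOn (fun k : R3 => 1 / ‖k - p‖ ^ 2) B := intOn_ball_shift p K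
  have hf3 : IntegrableOn (fun k : R3 => 1 / ‖k + p‖ ^ 2) B := by
    have := intOn_ball_shift (-p) K
    simpa [sub_neg_eq_add] using this
  set u := fun k : R3 => 1 / ‖k‖ ^ 2 - 1 / ‖k - p‖ ^ 2 with hu_def
  set v := fun k : R3 => 1 / ‖k‖ ^ 2 - 1 / ‖k + p‖ ^ 2 with hv_def
  have hu : IntegrableOn u B := hf1.sub hf2
  have hv : IntegrableOn v B := hf1.sub hf3
  have hsym : ∫ k in B, v k = ∫ k in B, u k := by
    have h1 : ∫ k in B, v k = ∫ k, Set.indicator B v k :=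
      (integral_indicator measurableSet_ball).symm
    have h2 : ∫ k in B, u k = ∫ k, Set.indicator B u k :=
      (integral_indicator measurableSet_ball).symm
    rw [h1, h2]
    have h3 := MeasureTheory.integral_neg_eq_self (Set.indicator B v) (volume : Measure R3)
    rw [← h3]
    congr 1
    funext x
    have hmem : -x ∈ B ↔ x ∈ B := by
      simp [hB_def, mem_ball_zero_iff]
    have hval : v (-x) = u x := by
      simp only [hv_def, hu_def]
      have e1 : ‖(-x : R3)‖ = ‖x‖ := norm_neg x
      have e2 : ‖(-x : R3) + p‖ = ‖x - p‖ := by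
        rw [show (-x : R3) + p = -(x - p) from by abel, norm_neg]
      rw [e1, e2]
    by_cases hx : x ∈ B
    · rw [Set.indicator_of_mem (hmem.mpr hx), Set.indicator_of_mem hx, hval]
    · rw [Set.indicator_of_notMem (fun h => hx (hmem.mp h)),
        Set.indicator_of_notMem hx]
  have hsum : ∫ k in B, (2 / ‖k‖ ^ 2 - 1 / ‖k - p‖ ^ 2 - 1 / ‖k + p‖ ^ 2)
      = (∫ k in B, u k) + ∫ k in B, v k := by
    rw [← integral_add hu hv]
    refine integral_congr_ae (Filter.Eventually.of_forall fun k => ?_)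
    simp only [hu_def, hv_def]
    ring
  rw [hsum, hsym]
  ring

lemma tendsto_ball_integral (p : R3) :
    Filter.Tendsto
      (fun K : ℝ => ∫ k in Metric.ball (0 : R3) K,
        (2 / ‖k‖ ^ 2 - 1 / ‖k - p‖ ^ 2 - 1 / ‖k + p‖ ^ 2))
      Filter.atTop (nhds 0) := by
  set gp := fun k : R3 => 2 / ‖k‖ ^ 2 - 1 / ‖k - p‖ ^ 2 - 1 / ‖k + p‖ ^ 2 with hgp_def
  have hInt : Integrable gp := integrable_g p
  have key : Filter.Tendsto (fun K : ℝ => ∫ k : R3, Set.indicator (Metric.ball 0 K) gp k)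
      Filter.atTop (nhds (∫ k : R3, gp k)) := by
    refine MeasureTheory.tendsto_integral_filter_of_dominated_convergence
      (fun k => ‖gp k‖) ?_ ?_ hInt.norm ?_
    · exact Filter.Eventually.of_forall fun K =>
        (hInt.aestronglyMeasurable.indicator measurableSet_ball)
    · refine Filter.Eventually.of_forall fun K => Filter.Eventually.of_forall fun a => ?_
      exact (norm_indicator_le_norm_self gp a)
    · refine Filter.Eventually.of_forall fun a => ?_
      refine Filter.Tendsto.congr' ?_ tendsto_const_nhds
      filter_upwards [Filter.eventually_gt_atTop ‖a‖] with K hK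
      exact (Set.indicator_of_mem (mem_ball_zero_iff.mpr hK) gp).symm
  rw [integral_g_zero p] at key
  refine key.congr fun K => ?_
  exact integral_indicator measurableSet_ball

/-- for every `p ∈ ℝ³`, the function
`k ↦ 2/|k|² - 1/|k-p|² - 1/|k+p|²` is integrable on `ℝ³` with integral `0`;
equivalently, `lim_{K→∞} ∫_{|k|<K} (1/|k|² - 1/|k-p|²) dk = 0`. -/
theorem integral_inverse_square_shift (p : R3) :
    Integrable (fun k : R3 =>
      2 / ‖k‖ ^ 2 - 1 / ‖k - p‖ ^ 2 - 1 / ‖k + p‖ ^ 2) ∧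
    (∫ k : R3, (2 / ‖k‖ ^ 2 - 1 / ‖k - p‖ ^ 2 - 1 / ‖k + p‖ ^ 2)) = 0 ∧
    Filter.Tendsto
      (fun K : ℝ => ∫ k in Metric.ball (0 : R3) K, (1 / ‖k‖ ^ 2 - 1 / ‖k - p‖ ^ 2))
      Filter.atTop (nhds 0) := by
  refine ⟨integrable_g p, integral_g_zero p, ?_⟩
  have h := (tendsto_ball_integral p).const_mul (1/2 : ℝ)
  rw [mul_zero] at h
  refine h.congr fun K => ?_
  exact (half_integral p K).symm
end
end
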